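/- Let q be a prime power, f : F_q^k → S any function, and t_d ≤ t_f natural numbers. Then: (i) for any vectors u_1, …, u_m ∈ F_q^k, r_f(k, t_d, t_f) ≥ N(D_f(t_d, t_f : u_1, …, u_m)); (ii) if |Im(f)| ≥ 2, then r_f(k, t_d, t_f) ≥ 2t_f; and (iii) r_f(k, t_d, t_f) ≥ N(q^k, 2t_d+1) − k, where N(M, d) denotes the minimum length of a q-ary code with M codewords and pairwise Hamming distance at least d. -/

import Mathlib

/-- The distance requirement matrix `D_f(t_d, t_f : u_1, …, u_M)`. -/
def DRM {F S : Type*} [Fintype F] [DecidableEq F] [DecidableEq S] {k M : ℕ}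
    (f : (Fin k → F) → S) (td tf : ℕ) (u : Fin M → Fin k → F) :
    Fin M → Fin M → ℕ := fun i j =>
  if u i ≠ u j ∧ f (u i) = f (u j) then 2 * td + 1 - hammingDist (u i) (u j)
  else if f (u i) ≠ f (u j) then 2 * tf + 1 - hammingDist (u i) (u j)
  else 0

/-- `N(D)`: the least length `r` for which a `D`-code of length `r` over `F` exists. -/
noncomputable def Nmat (F : Type*) [Fintype F] [DecidableEq F] {M : ℕ}
    (D : Fin M → Fin M → ℕ) : ℕ :=
  sInf {r : ℕ | ∃ p : Fin M → Fin r → F, ∀ i j, D i j ≤ hammingDist (p i) (p j)}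

/-- `N(M, d)`: the minimum length of a code over `F` with `M` codewords and pairwise
Hamming distance at least `d`. -/
noncomputable def Ncode (F : Type*) [Fintype F] [DecidableEq F] (M d : ℕ) : ℕ :=
  sInf {n : ℕ | ∃ p : Fin M → Fin n → F, ∀ i j, i ≠ j → d ≤ hammingDist (p i) (p j)}

/-- An `(f : d_d, d_f)`-FCC. -/
def IsFCC {F S : Type*} [Fintype F] [DecidableEq F] {k r : ℕ}
    (f : (Fin k → F) → S) (dd df : ℕ)
    (c : (Fin k → F) → (Fin (k + r) → F)) : Prop :=
  (∀ u i, c u (Fin.castAdd r i) = u i) ∧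
  (∀ u v, u ≠ v → dd ≤ hammingDist (c u) (c v)) ∧
  (∀ u v, f u ≠ f v → df ≤ hammingDist (c u) (c v))

/-- The optimal redundancy `r_f(k, t_d, t_f)`. -/
noncomputable def optRedundancy {F S : Type*} [Fintype F] [DecidableEq F] {k : ℕ}
    (f : (Fin k → F) → S) (dd df : ℕ) : ℕ :=
  sInf {r : ℕ | ∃ c : (Fin k → F) → (Fin (k + r) → F), IsFCC f dd df c}

/-- Splitting the Hamming distance on `Fin (k + r)` into the two blocks. -/
lemma hammingDist_fin_add {F : Type*} [DecidableEq F] {k r : ℕ} (x y : Fin (k + r) → F) :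
    hammingDist x y =
      hammingDist (fun i => x (Fin.castAdd r i)) (fun i => y (Fin.castAdd r i)) +
      hammingDist (fun j => x (Fin.natAdd k j)) (fun j => y (Fin.natAdd k j)) := by
  simp only [hammingDist, Finset.card_filter]
  exact Fin.sum_univ_add _

/-- If `f` takes two distinct values, it takes distinct values on a pair of vectors at
Hamming distance at most 1. -/
lemma exists_adjacent {F S : Type*} [DecidableEq F] {k : ℕ} (f : (Fin k → F) → S) :
    ∀ n (u v : Fin k → F), hammingDist u v ≤ n → f u ≠ f v →
      ∃ a b, hammingDist a b ≤ 1 ∧ f a ≠ f b := by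
  intro n
  induction n with
  | zero => intro u v h hf; exact ⟨u, v, le_trans h (by omega), hf⟩
  | succ n ih =>
    intro u v h hf
    by_cases h1 : hammingDist u v ≤ 1
    · exact ⟨u, v, h1, hf⟩
    · have huv : u ≠ v := by
        intro he; rw [he] at h1; simp [hammingDist_eq_zero] at h1
      obtain ⟨i, hi⟩ := Function.ne_iff.mp huv
      set w := Function.update u i (v i) with hw
      have hdw : hammingDist u w ≤ 1 := by
        have hsub : (Finset.univ.filter fun j => u j ≠ w j) ⊆ {i} := by
          intro j hj
          simp only [Finset.mem_filter] at hj
          simp only [Finset.mem_singleton]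
          by_contra hji
          exact hj.2 (by simp [hw, Function.update_of_ne hji])
        calc hammingDist u w ≤ ({i} : Finset (Fin k)).card := Finset.card_le_card hsub
        _ = 1 := Finset.card_singleton i
      have hdwv : hammingDist w v ≤ n := by
        have hsub : (Finset.univ.filter fun j => w j ≠ v j) ⊆
            (Finset.univ.filter fun j => u j ≠ v j).erase i := by
          intro j hj
          simp only [Finset.mem_filter] at hj
          rcases eq_or_ne j i with rfl | hji
          · exact absurd (by simp [hw]) hj.2
          · exact Finset.mem_erase.mpr ⟨hji, by
              simp only [Finset.mem_filter, Finset.mem_univ, true_and]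
              rw [hw, Function.update_of_ne hji] at hj; exact hj.2⟩
        have : hammingDist w v ≤ hammingDist u v - 1 := by
          calc hammingDist w v ≤ _ := Finset.card_le_card hsub
          _ = hammingDist u v - 1 := by
            rw [Finset.card_erase_of_mem (by simp [hi])]; rfl
        omega
      by_cases hfu : f u ≠ f w
      · exact ⟨u, w, hdw, hfu⟩
      · push_neg at hfu
        exact ih w v hdwv (by rw [← hfu]; exact hf)

/-- An FCC always exists (for some redundancy). -/
lemma fcc_exists {F S : Type*} [Fintype F] [DecidableEq F] {k : ℕ}
    (f : (Fin k → F) → S) (td tf : ℕ) (htdtf : td ≤ tf) :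
    {r : ℕ | ∃ c : (Fin k → F) → (Fin (k + r) → F), IsFCC f (2*td+1) (2*tf+1) c}.Nonempty := by
  rcases Nat.eq_zero_or_pos k with rfl | hk
  · refine ⟨0, fun u => u, fun u i => i.elim0, ?_, ?_⟩
    · intro u v huv
      exact absurd (funext fun i => i.elim0) huv
    · intro u v huv
      exact absurd (congrArg f (funext fun i => i.elim0)) huv
  · set r0 := (2*tf+1)*k with hr0
    have hN : 0 < k + r0 := Nat.lt_of_lt_of_le hk (Nat.le_add_right k _)
    refine ⟨r0, fun u j => u ⟨j.val % k, Nat.mod_lt _ hk⟩, ?_, ?_, ?_⟩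
    · intro u i
      show u ⟨(Fin.castAdd r0 i).val % k, Nat.mod_lt _ hk⟩ = u i
      congr 1
      apply Fin.ext
      simp [Nat.mod_eq_of_lt i.isLt]
    all_goals {
      intro u v huv
      have huv' : u ≠ v := by
        first
        | exact huv
        | exact fun he => huv (congrArg f he)
      obtain ⟨i, hi⟩ := Function.ne_iff.mp huv'
      have key : 2*tf+2 ≤ hammingDist (fun j : Fin (k + r0) => u ⟨j.val % k, Nat.mod_lt _ hk⟩)
          (fun j : Fin (k + r0) => v ⟨j.val % k, Nat.mod_lt _ hk⟩) := by
        have hmap : ∀ b ∈ Finset.range (2*tf+2), b * k + i.val < k + r0 := by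
          intro b hb
          have hb' : b ≤ 2*tf+1 := by simpa using Nat.lt_succ_iff.mp (Finset.mem_range.mp hb)
          have h1 : b * k ≤ (2*tf+1) * k := Nat.mul_le_mul_right k hb'
          have h2 : i.val < k := i.isLt
          omega
        have := Finset.card_le_card_of_injOn
          (f := fun b => (⟨(b * k + i.val) % (k + r0), Nat.mod_lt _ hN⟩ : Fin (k + r0)))
          (s := Finset.range (2*tf+2))
          (t := Finset.univ.filter fun j : Fin (k + r0) =>
            (fun j : Fin (k + r0) => u ⟨j.val % k, Nat.mod_lt _ hk⟩) j ≠
            (fun j : Fin (k + r0) => v ⟨j.val % k, Nat.mod_lt _ hk⟩) j)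
          (by
            intro b hb
            simp only [Finset.mem_coe, Finset.mem_filter, Finset.mem_univ, true_and]
            have hlt := hmap b hb
            have hmod : (b * k + i.val) % (k + r0) = b * k + i.val := Nat.mod_eq_of_lt hlt
            have hmodk : (b * k + i.val) % k = i.val := by
              rw [Nat.add_comm, Nat.add_mul_mod_self_right, Nat.mod_eq_of_lt i.isLt]
            simp only [hmod]
            intro hcon
            apply hi
            have h1 : (⟨(b * k + i.val) % k, Nat.mod_lt _ hk⟩ : Fin k) = i :=
              Fin.ext hmodk
            rwa [h1] at hcon)
          (by
            intro b1 hb1 b2 hb2 heq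
            have h1 := hmap b1 hb1
            have h2 := hmap b2 hb2
            have := congrArg Fin.val heq
            simp only [Nat.mod_eq_of_lt h1, Nat.mod_eq_of_lt h2] at this
            have : b1 * k = b2 * k := by omega
            exact Nat.eq_of_mul_eq_mul_right hk this)
        simpa [hammingDist] using this
      calc _ ≤ 2*tf+2 := by omega
      _ ≤ _ := key
    }

/-- (i) `r_f(k, t_d, t_f) ≥ N(D_f(t_d, t_f : u_1, …, u_m))` for any vectors;
(ii) if `|Im(f)| ≥ 2` then `r_f(k, t_d, t_f) ≥ 2 t_f`;
(iii) `r_f(k, t_d, t_f) ≥ N(q^k, 2 t_d + 1) − k`. -/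
theorem optRedundancy_lower_bounds
    {F S : Type*} [Field F] [Fintype F] [DecidableEq F] [DecidableEq S]
    {k : ℕ} (f : (Fin k → F) → S) (td tf : ℕ) (htdtf : td ≤ tf) :
    (∀ (m : ℕ) (u : Fin m → Fin k → F),
        Nmat F (DRM f td tf u) ≤ optRedundancy f (2 * td + 1) (2 * tf + 1)) ∧
    ((Set.range f).Nontrivial →
        2 * tf ≤ optRedundancy f (2 * td + 1) (2 * tf + 1)) ∧
    (Ncode F (Fintype.card F ^ k) (2 * td + 1) - k ≤
        optRedundancy f (2 * td + 1) (2 * tf + 1)) := by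
  have hne := fcc_exists f td tf htdtf
  refine ⟨?_, ?_, ?_⟩
  · -- (i)
    intro m u
    apply le_csInf hne
    rintro r ⟨c, hc1, hc2, hc3⟩
    have hsplit : ∀ a b : Fin k → F, hammingDist (c a) (c b) =
        hammingDist a b +
        hammingDist (fun j => c a (Fin.natAdd k j)) (fun j => c b (Fin.natAdd k j)) := by
      intro a b
      rw [hammingDist_fin_add (c a) (c b)]
      have ha : (fun i => c a (Fin.castAdd r i)) = a := funext (hc1 a)
      have hb : (fun i => c b (Fin.castAdd r i)) = b := funext (hc1 b)
      rw [ha, hb]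
    apply Nat.sInf_le
    refine ⟨fun i => fun j => c (u i) (Fin.natAdd k j), fun i j => ?_⟩
    show DRM f td tf u i j ≤
      hammingDist (fun j' => c (u i) (Fin.natAdd k j')) (fun j' => c (u j) (Fin.natAdd k j'))
    unfold DRM
    split_ifs with h1 h2
    · have := hc2 (u i) (u j) h1.1
      rw [hsplit] at this
      omega
    · have := hc3 (u i) (u j) h2
      rw [hsplit] at this
      omega
    · exact Nat.zero_le _
  · -- (ii)
    rintro ⟨a, ⟨ua, rfl⟩, b, ⟨ub, rfl⟩, hab⟩
    obtain ⟨x, y, hd1, hfxy⟩ := exists_adjacent f (hammingDist ua ub) ua ub le_rfl hab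
    apply le_csInf hne
    rintro r ⟨c, hc1, hc2, hc3⟩
    have h := hc3 x y hfxy
    rw [hammingDist_fin_add (c x) (c y)] at h
    have hx : (fun i => c x (Fin.castAdd r i)) = x := funext (hc1 x)
    have hy : (fun i => c y (Fin.castAdd r i)) = y := funext (hc1 y)
    rw [hx, hy] at h
    have hr : hammingDist (fun j => c x (Fin.natAdd k j)) (fun j => c y (Fin.natAdd k j)) ≤ r :=
      le_trans hammingDist_le_card_fintype (by simp)
    omega
  · -- (iii)
    apply le_csInf hne
    rintro r ⟨c, hc1, hc2, hc3⟩
    have hcard : Fintype.card (Fin k → F) = Fintype.card F ^ k := by simp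
    set e := Fintype.equivFinOfCardEq hcard with he
    have hle : Ncode F (Fintype.card F ^ k) (2 * td + 1) ≤ k + r := by
      apply Nat.sInf_le
      refine ⟨fun i => c (e.symm i), fun i j hij => ?_⟩
      exact hc2 _ _ fun hcon => hij (e.symm.injective hcon)
    omega
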